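/- Let P be a geodesic k-gon in a metric space with two consecutive edges [x,y] and [y,z] such that dist(x, [y,z]) = dist(x,y). If P is (θ,ν)-fat, then the (k+1)-gon P′ obtained from P by adding as a new vertex the point v ∈ [x,y] with dist(v,y) = νθ/2 (which exists since dist(x,y) ≥ νθ) is (θ, ν/2)-fat. -/

import Mathlib

open Set Metric

/-! ### Basic metric notions: tubular neighborhoods, geodesics -/

variable {X : Type*} [MetricSpace X]

/-- Open `δ`-tubular neighborhood of a subset. -/
def tubN (δ : ℝ) (A : Set X) : Set X := {x | Metric.infDist x A < δ}

/-- Closed `δ`-tubular neighborhood of a subset. -/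
def ctubN (δ : ℝ) (A : Set X) : Set X := {x | Metric.infDist x A ≤ δ}

/-- `γ` parametrizes a geodesic of length `ℓ` (an isometric embedding of `[0,ℓ]`). -/
def IsGeodesicParam (γ : ℝ → X) (ℓ : ℝ) : Prop :=
  0 ≤ ℓ ∧ ∀ s ∈ Set.Icc (0:ℝ) ℓ, ∀ t ∈ Set.Icc (0:ℝ) ℓ, dist (γ s) (γ t) = |s - t|

/-- A metric space is geodesic if every two points are joined by a geodesic. -/
def GeodesicSpace (X : Type*) [MetricSpace X] : Prop :=
  ∀ x y : X, ∃ (γ : ℝ → X) (ℓ : ℝ), IsGeodesicParam γ ℓ ∧ γ 0 = x ∧ γ ℓ = y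

/-- The cyclic successor of an index in `Fin k`. -/
def finCycSucc {k : ℕ} (i : Fin k) : Fin k := ⟨(i.val + 1) % k, Nat.mod_lt _ i.pos⟩

/-! ### Polygons -/

/-- The data of a `k`-gon: `k` parametrized paths with their lengths. -/
structure PrePolygon (X : Type*) (k : ℕ) where
  edge : Fin k → ℝ → X
  len : Fin k → ℝ

namespace PrePolygon

variable {k : ℕ}

/-- The `i`-th edge, as a subset. -/
def edgeSet (P : PrePolygon X k) (i : Fin k) : Set X := P.edge i '' Set.Icc 0 (P.len i)

/-- The polygon, as a subset (union of its edges). -/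
def carrier (P : PrePolygon X k) : Set X := ⋃ i, P.edgeSet i

/-- The `i`-th vertex (the origin of the `i`-th edge). -/
def vertex (P : PrePolygon X k) (i : Fin k) : X := P.edge i 0

/-- The union `O_x` of the edges not adjacent to the `i`-th vertex. -/
def opp (P : PrePolygon X k) (i : Fin k) : Set X :=
  ⋃ j ∈ {j : Fin k | j ≠ i ∧ finCycSucc j ≠ i}, P.edgeSet j

/-- The edges close up cyclically (the endpoint of each edge is the origin of the next). -/
def IsClosedPolygon (P : PrePolygon X k) : Prop :=
  (∀ i, 0 ≤ P.len i) ∧ ∀ i, P.edge i (P.len i) = P.edge (finCycSucc i) 0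

/-- A geodesic `k`-gon. -/
def IsGeodesicPolygon (P : PrePolygon X k) : Prop :=
  P.IsClosedPolygon ∧ ∀ i, IsGeodesicParam (P.edge i) (P.len i)

/-- The polygon is `(θ,σ,ν)`-fat:  (F1) every point of an edge at distance at least `σθ`
from both endpoints of the edge is at distance at least `θ` from the rest of the polygon;
(F2) every vertex is at distance at least `νθ` from the union of the non-adjacent edges. -/
def IsFat (P : PrePolygon X k) (θ σ ν : ℝ) : Prop :=
  (∀ i : Fin k, ∀ p ∈ P.edgeSet i,
      σ * θ ≤ dist p (P.edge i 0) → σ * θ ≤ dist p (P.edge i (P.len i)) →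
      θ ≤ Metric.infDist p (P.carrier \ P.edgeSet i)) ∧
  (∀ i : Fin k, ν * θ ≤ Metric.infDist (P.vertex i) (P.opp i))

/-- `(θ,ν)`-fat means `(θ,2,ν)`-fat. -/
def IsFat2 (P : PrePolygon X k) (θ ν : ℝ) : Prop := P.IsFat θ 2 ν

end PrePolygon

/-! ### Gromov hyperbolicity (thin triangles) -/

/-- A geodesic metric space is Gromov hyperbolic if there is `δ ≥ 0` such that every geodesic
triangle is `δ`-thin: each side lies in the closed `δ`-neighborhood of the other two sides. -/
def GromovHyperbolic (X : Type*) [MetricSpace X] : Prop :=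
  ∃ δ : ℝ, 0 ≤ δ ∧ ∀ T : PrePolygon X 3, T.IsGeodesicPolygon →
    ∀ i : Fin 3, ∀ p ∈ T.edgeSet i,
      Metric.infDist p (T.edgeSet (finCycSucc i) ∪ T.edgeSet (finCycSucc (finCycSucc i))) ≤ δ

/-! ### The Druţu–Sapir properties of a pair `(X, 𝓐)` -/

/-- Property (α₁): uniformly bounded intersections of tubular neighborhoods. -/
def Alpha1 (𝓐 : Set (Set X)) : Prop :=
  ∀ δ : ℝ, 0 < δ → ∃ D : ℝ, ∀ A ∈ 𝓐, ∀ A' ∈ 𝓐, A ≠ A' →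
    ∀ x ∈ tubN δ A ∩ tubN δ A', ∀ y ∈ tubN δ A ∩ tubN δ A', dist x y ≤ D

/-- Property (α₂) with given constants `ε`, `M`. -/
def Alpha2With (𝓐 : Set (Set X)) (ε M : ℝ) : Prop :=
  ∀ (γ : ℝ → X) (ℓ : ℝ), IsGeodesicParam γ ℓ → ∀ A ∈ 𝓐,
    γ 0 ∈ tubN (ε * ℓ) A → γ ℓ ∈ tubN (ε * ℓ) A →
    ∃ t ∈ Set.Icc (0:ℝ) ℓ, γ t ∈ tubN M A

/-- Property (α₂). -/
def Alpha2 (𝓐 : Set (Set X)) : Prop :=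
  ∃ ε M : ℝ, 0 ≤ ε ∧ ε < 1/2 ∧ 0 < M ∧ Alpha2With 𝓐 ε M

/-- Property (α₃): fat geodesic `k`-gons lie in tubular neighborhoods of pieces. -/
def Alpha3 (𝓐 : Set (Set X)) : Prop :=
  ∀ k : ℕ, 2 ≤ k → ∃ θ : ℝ, 0 < θ ∧ ∃ ν : ℝ, 8 ≤ ν ∧ ∃ χ : ℝ, 0 < χ ∧
    ∀ P : PrePolygon X k, P.IsGeodesicPolygon → P.IsFat2 θ ν →
      ∃ A ∈ 𝓐, P.carrier ⊆ tubN χ A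

/-- Property (β₂) with given constants `ε`, `M`: middle thirds of geodesics with endpoints
close to a piece stay close to the piece. -/
def Beta2With (𝓐 : Set (Set X)) (ε M : ℝ) : Prop :=
  ∀ (γ : ℝ → X) (ℓ : ℝ), IsGeodesicParam γ ℓ → ∀ A ∈ 𝓐,
    γ 0 ∈ tubN (ε * ℓ) A → γ ℓ ∈ tubN (ε * ℓ) A →
    ∀ t ∈ Set.Icc (ℓ/3) (2*ℓ/3), γ t ∈ tubN M A

/-- Property (β₂). -/
def Beta2 (𝓐 : Set (Set X)) : Prop := ∃ ε M : ℝ, 0 < ε ∧ 0 ≤ M ∧ Beta2With 𝓐 ε M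

/-- Property (β₃) with given constants: fat geodesic hexagons lie in tubular
neighborhoods of pieces. -/
def Beta3With (𝓐 : Set (Set X)) (θ ν χ : ℝ) : Prop :=
  ∀ P : PrePolygon X 6, P.IsGeodesicPolygon → P.IsFat2 θ ν → ∃ A ∈ 𝓐, P.carrier ⊆ tubN χ A

/-- Property (β₃). -/
def Beta3 (𝓐 : Set (Set X)) : Prop :=
  ∃ θ : ℝ, 0 < θ ∧ ∃ ν : ℝ, 8 ≤ ν ∧ ∃ χ : ℝ, 0 < χ ∧ Beta3With 𝓐 θ ν χ

/-- Property (Q), uniform quasi-convexity of pieces, with given constants `t`, `K₀`. -/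
def PropQWith (𝓐 : Set (Set X)) (t K₀ : ℝ) : Prop :=
  ∀ A ∈ 𝓐, ∀ K : ℝ, K₀ ≤ K → ∀ (γ : ℝ → X) (ℓ : ℝ), IsGeodesicParam γ ℓ →
    γ 0 ∈ tubN K A → γ ℓ ∈ tubN K A → ∀ s ∈ Set.Icc (0:ℝ) ℓ, γ s ∈ tubN (t * K) A

/-- Property (Q), uniform quasi-convexity of pieces. -/
def PropQ (𝓐 : Set (Set X)) : Prop :=
  ∃ t : ℝ, 0 < t ∧ ∃ K₀ : ℝ, 0 ≤ K₀ ∧ PropQWith 𝓐 t K₀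

/-- `X` is asymptotically tree-graded with respect to `𝓐` (Druţu–Sapir metric
characterization, taken as the definition): (α₁), (α₂) and (α₃) hold. -/
def ATG (𝓐 : Set (Set X)) : Prop := Alpha1 𝓐 ∧ Alpha2 𝓐 ∧ Alpha3 𝓐

/-! ### Entrance and exit points, almost geodesics, the (*) property -/

/-- The entrance point of the path `p : [0,ℓ] → X` in the set `S`. -/
noncomputable def entrancePoint (p : ℝ → X) (ℓ : ℝ) (S : Set X) : X :=
  p (sInf {t | t ∈ Set.Icc (0:ℝ) ℓ ∧ p t ∈ S})

/-- The exit point of the path `p : [0,ℓ] → X` from the set `S`. -/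
noncomputable def exitPoint (p : ℝ → X) (ℓ : ℝ) (S : Set X) : X :=
  p (sSup {t | t ∈ Set.Icc (0:ℝ) ℓ ∧ p t ∈ S})

/-- `q` is a `(1,C)`-almost geodesic on `[0,ℓ]`: a `1`-Lipschitz `(1,C)`-quasi-geodesic. -/
def IsAlmostGeodesic (C : ℝ) (q : ℝ → X) (ℓ : ℝ) : Prop :=
  0 ≤ ℓ ∧ ∀ s ∈ Set.Icc (0:ℝ) ℓ, ∀ t ∈ Set.Icc (0:ℝ) ℓ,
    |s - t| - C ≤ dist (q s) (q t) ∧ dist (q s) (q t) ≤ |s - t|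

/-- The `(*)` alternative for triangles with `(1,C)`-almost geodesic edges,
with constants `σ`, `δ`. -/
def StarATGWith (𝓐 : Set (Set X)) (C σ δ : ℝ) : Prop :=
  ∀ T : PrePolygon X 3, T.IsClosedPolygon →
    (∀ i, IsAlmostGeodesic C (T.edge i) (T.len i)) →
    (∃ a : X, ∀ i : Fin 3, (Metric.closedBall a σ ∩ T.edgeSet i).Nonempty) ∨
    (∃ A ∈ 𝓐, (∀ i : Fin 3, (ctubN σ A ∩ T.edgeSet i).Nonempty) ∧
      ∀ i : Fin 3, dist (exitPoint (T.edge i) (T.len i) (ctubN σ A))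
        (entrancePoint (T.edge (finCycSucc i)) (T.len (finCycSucc i)) (ctubN σ A)) < δ)

/-- `X` is `(*)`-asymptotically tree-graded with respect to `𝓐`. -/
def StarATG (𝓐 : Set (Set X)) : Prop :=
  ∀ C : ℝ, 0 ≤ C → ∃ σ δ : ℝ, StarATGWith 𝓐 C σ δ

/-- The `(k+1)`-gon obtained from a `k`-gon by splitting its `i`-th edge at parameter `c`,
i.e. adding the point `P.edge i c` as a new vertex. -/
def PrePolygon.split {k : ℕ} (P : PrePolygon X k) (i : Fin k) (c : ℝ) :
    PrePolygon X (k + 1) where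
  edge := fun j =>
    if h : j.val < i.val then P.edge ⟨j.val, h.trans i.isLt⟩
    else if _h2 : j.val = i.val then P.edge i
    else if _h3 : j.val = i.val + 1 then fun t => P.edge i (c + t)
    else P.edge ⟨j.val - 1, by have h1 := j.isLt; have h2 := i.isLt; omega⟩
  len := fun j =>
    if h : j.val < i.val then P.len ⟨j.val, h.trans i.isLt⟩
    else if _h2 : j.val = i.val then c
    else if _h3 : j.val = i.val + 1 then P.len i - c
    else P.len ⟨j.val - 1, by have h1 := j.isLt; have h2 := i.isLt; omega⟩


/-! ### Auxiliary lemmas for `split_fat_polygon` -/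

theorem aux_le_infDist {x : X} {s : Set X} {b : ℝ} (hs : s.Nonempty)
    (h : ∀ y ∈ s, b ≤ dist x y) : b ≤ Metric.infDist x s := by
  by_contra hb
  obtain ⟨y, hy, hxy⟩ := (Metric.infDist_lt_iff hs).1 (lt_of_not_ge hb)
  exact absurd (h y hy) (not_le.2 hxy)

theorem aux_modHelper {a n : ℕ} (_h : a < n) :
    (a + 1) % n = if a + 1 = n then 0 else a + 1 := by
  split_ifs with h'
  · rw [h', Nat.mod_self]
  · exact Nat.mod_eq_of_lt (by omega)

theorem aux_geo_inj {γ : ℝ → X} {ℓ : ℝ} (h : ∀ s ∈ Set.Icc (0:ℝ) ℓ, ∀ t ∈ Set.Icc (0:ℝ) ℓ,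
    dist (γ s) (γ t) = |s - t|) {s t : ℝ} (hs : s ∈ Set.Icc (0:ℝ) ℓ)
    (ht : t ∈ Set.Icc (0:ℝ) ℓ) (he : γ s = γ t) : s = t := by
  have h2 := h s hs t ht
  rw [he, dist_self] at h2
  have := abs_eq_zero.mp h2.symm
  linarith [abs_nonneg (s - t)]

namespace PrePolygon
variable {k : ℕ} (P : PrePolygon X k) (i : Fin k) (c : ℝ)

theorem edgeSet_nonempty {n : ℕ} (Q : PrePolygon X n) (j : Fin n) (h : 0 ≤ Q.len j) :
    (Q.edgeSet j).Nonempty :=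
  ⟨Q.edge j 0, Set.mem_image_of_mem _ ⟨le_refl 0, h⟩⟩

theorem split_edge_of_lt {j : Fin (k+1)} (h : j.val < i.val) :
    (P.split i c).edge j = P.edge ⟨j.val, h.trans i.isLt⟩ := dif_pos h

theorem split_len_of_lt {j : Fin (k+1)} (h : j.val < i.val) :
    (P.split i c).len j = P.len ⟨j.val, h.trans i.isLt⟩ := dif_pos h

theorem split_edge_of_eq {j : Fin (k+1)} (h : j.val = i.val) :
    (P.split i c).edge j = P.edge i := by
  show dite _ _ _ = _
  rw [dif_neg (by omega), dif_pos h]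

theorem split_len_of_eq {j : Fin (k+1)} (h : j.val = i.val) :
    (P.split i c).len j = c := by
  show dite _ _ _ = _
  rw [dif_neg (by omega), dif_pos h]

theorem split_edge_of_succ {j : Fin (k+1)} (h : j.val = i.val + 1) :
    (P.split i c).edge j = fun t => P.edge i (c + t) := by
  show dite _ _ _ = _
  rw [dif_neg (by omega), dif_neg (by omega), dif_pos h]

theorem split_len_of_succ {j : Fin (k+1)} (h : j.val = i.val + 1) :
    (P.split i c).len j = P.len i - c := by
  show dite _ _ _ = _
  rw [dif_neg (by omega), dif_neg (by omega), dif_pos h]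

theorem split_edge_of_gt {j : Fin (k+1)} (h : i.val + 1 < j.val) :
    (P.split i c).edge j = P.edge ⟨j.val - 1, by have := j.isLt; omega⟩ := by
  show dite _ _ _ = _
  rw [dif_neg (by omega), dif_neg (by omega), dif_neg (by omega)]

theorem split_len_of_gt {j : Fin (k+1)} (h : i.val + 1 < j.val) :
    (P.split i c).len j = P.len ⟨j.val - 1, by have := j.isLt; omega⟩ := by
  show dite _ _ _ = _
  rw [dif_neg (by omega), dif_neg (by omega), dif_neg (by omega)]

theorem split_edgeSet_of_lt {j : Fin (k+1)} (h : j.val < i.val) :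
    (P.split i c).edgeSet j = P.edgeSet ⟨j.val, h.trans i.isLt⟩ := by
  unfold edgeSet
  rw [split_edge_of_lt P i c h, split_len_of_lt P i c h]

theorem split_edgeSet_of_eq {j : Fin (k+1)} (h : j.val = i.val) :
    (P.split i c).edgeSet j = P.edge i '' Set.Icc 0 c := by
  unfold edgeSet
  rw [split_edge_of_eq P i c h, split_len_of_eq P i c h]

theorem split_edgeSet_of_succ {j : Fin (k+1)} (h : j.val = i.val + 1) :
    (P.split i c).edgeSet j = P.edge i '' Set.Icc c (P.len i) := by
  unfold edgeSet
  rw [split_edge_of_succ P i c h, split_len_of_succ P i c h]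
  rw [show ((fun t => P.edge i (c + t)) '' Set.Icc 0 (P.len i - c))
      = P.edge i '' ((fun t => c + t) '' Set.Icc 0 (P.len i - c)) from
    (Set.image_image _ _ _).symm]
  rw [Set.image_const_add_Icc]
  congr 1 <;> ring_nf

theorem split_edgeSet_of_gt {j : Fin (k+1)} (h : i.val + 1 < j.val) :
    (P.split i c).edgeSet j = P.edgeSet ⟨j.val - 1, by have := j.isLt; omega⟩ := by
  unfold edgeSet
  rw [split_edge_of_gt P i c h, split_len_of_gt P i c h]

theorem split_carrier (hc0 : 0 ≤ c) (hc1 : c ≤ P.len i) :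
    (P.split i c).carrier = P.carrier := by
  apply subset_antisymm
  · intro x hx
    obtain ⟨j, hj⟩ := Set.mem_iUnion.1 hx
    rcases lt_or_ge j.val i.val with h | h
    · rw [split_edgeSet_of_lt P i c h] at hj
      exact Set.mem_iUnion.2 ⟨_, hj⟩
    rcases eq_or_lt_of_le h with h | h
    · rw [split_edgeSet_of_eq P i c h.symm] at hj
      exact Set.mem_iUnion.2 ⟨i, Set.image_mono (Set.Icc_subset_Icc le_rfl hc1) hj⟩
    rcases eq_or_lt_of_le (Nat.succ_le_of_lt h) with h2 | h2
    · rw [split_edgeSet_of_succ P i c h2.symm] at hj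
      exact Set.mem_iUnion.2 ⟨i, Set.image_mono (Set.Icc_subset_Icc hc0 le_rfl) hj⟩
    · rw [split_edgeSet_of_gt P i c h2] at hj
      exact Set.mem_iUnion.2 ⟨_, hj⟩
  · intro x hx
    obtain ⟨j, hj⟩ := Set.mem_iUnion.1 hx
    rcases lt_or_ge j.val i.val with h | h
    · refine Set.mem_iUnion.2 ⟨⟨j.val, by omega⟩, ?_⟩
      rw [split_edgeSet_of_lt P i c h]
      exact hj
    rcases eq_or_lt_of_le h with h | h
    · -- j = i : split the edge
      obtain ⟨t, ht, rfl⟩ := hj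
      have hji : j = i := Fin.ext h.symm
      subst hji
      rcases le_or_gt t c with htc | htc
      · refine Set.mem_iUnion.2 ⟨⟨j.val, by have := j.isLt; omega⟩, ?_⟩
        rw [split_edgeSet_of_eq P j c rfl]
        exact Set.mem_image_of_mem _ ⟨ht.1, htc⟩
      · refine Set.mem_iUnion.2 ⟨⟨j.val + 1, by have := j.isLt; omega⟩, ?_⟩
        rw [split_edgeSet_of_succ P j c rfl]
        exact Set.mem_image_of_mem _ ⟨le_of_lt htc, ht.2⟩
    · refine Set.mem_iUnion.2 ⟨⟨j.val + 1, by have := j.isLt; omega⟩, ?_⟩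
      rw [split_edgeSet_of_gt P i c (by simp only [Fin.val_mk]; omega)]
      have : (⟨j.val + 1 - 1, by have := j.isLt; omega⟩ : Fin k) = j := Fin.ext rfl
      rw [this]
      exact hj

end PrePolygon

/-- **Lemma.** Let `P` be a `(θ,ν)`-fat geodesic `k`-gon with consecutive edges
`[x,y]` (the `i`-th edge) and `[y,z]` (the next edge) satisfying
`dist(x,[y,z]) = dist(x,y)`.  Then the `(k+1)`-gon obtained by adding as a new vertex
the point `v ∈ [x,y]` with `dist(v,y) = νθ/2` is `(θ,ν/2)`-fat. -/
theorem split_fat_polygon {k : ℕ} (P : PrePolygon X k) (hP : P.IsGeodesicPolygon)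
    (θ ν : ℝ) (hθ : 0 < θ) (hν : 8 ≤ ν) (hfat : P.IsFat2 θ ν)
    (i : Fin k)
    (hmin : Metric.infDist (P.edge i 0) (P.edgeSet (finCycSucc i))
      = dist (P.edge i 0) (P.edge i (P.len i)))
    (hc : ν * θ / 2 ≤ P.len i) :
    (P.split i (P.len i - ν * θ / 2)).IsFat2 θ (ν / 2) := by
  classical
  set c := P.len i - ν * θ / 2 with hcdef
  clear_value c
  obtain ⟨hclosed, hgeo⟩ := hP
  obtain ⟨hF1, hF2⟩ := hfat
  have hθ0 : (0:ℝ) ≤ θ := le_of_lt hθ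
  have hνθ : 0 < ν * θ := by nlinarith
  by_cases hk : 3 ≤ k
  swap
  · exfalso
    have hopp : P.opp ⟨0, i.pos⟩ = ∅ := by
      apply Set.eq_empty_iff_forall_notMem.2
      intro x hx
      simp only [PrePolygon.opp, Set.mem_iUnion, Set.mem_setOf_eq] at hx
      obtain ⟨j, ⟨hj1, hj2⟩, _⟩ := hx
      have hjv := j.isLt
      have h1 : j.val ≠ 0 := fun h => hj1 (Fin.ext h)
      have h2 : j.val + 1 = k := by omega
      exact hj2 (Fin.ext (by show (j.val + 1) % k = 0; rw [h2, Nat.mod_self]))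
    have hcon := hF2 ⟨0, i.pos⟩
    rw [hopp, Metric.infDist_empty] at hcon
    linarith
  have hi := i.isLt
  have hd := (hgeo i).2
  have hlen0 := hclosed.1
  have hy := hclosed.2 i
  have hsucc_i : (finCycSucc i).val = if i.val + 1 = k then 0 else i.val + 1 :=
    aux_modHelper i.isLt
  have hii1 : finCycSucc i ≠ i := by
    apply Fin.ne_of_val_ne; rw [hsucc_i]; split_ifs <;> omega
  have hii2 : finCycSucc (finCycSucc i) ≠ i := by
    apply Fin.ne_of_val_ne
    show ((finCycSucc i).val + 1) % k ≠ i.val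
    rw [aux_modHelper (finCycSucc i).isLt, hsucc_i]
    split_ifs <;> omega
  have hdd : ∀ s t : ℝ, 0 ≤ s → s ≤ t → t ≤ P.len i →
      dist (P.edge i s) (P.edge i t) = t - s := by
    intro s t hs hst ht
    rw [hd s ⟨hs, le_trans hst ht⟩ t ⟨le_trans hs hst, ht⟩, abs_sub_comm,
      abs_of_nonneg (by linarith)]
  have hmemIcc : ∀ t : ℝ, 0 ≤ t → t ≤ P.len i → P.edge i t ∈ P.edgeSet i :=
    fun t h1 h2 => Set.mem_image_of_mem _ ⟨h1, h2⟩
  have hlenige : ν * θ ≤ P.len i := by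
    have hsub : P.edgeSet (finCycSucc i) ⊆ P.opp i :=
      Set.subset_biUnion_of_mem (u := fun j => P.edgeSet j) ⟨hii1, hii2⟩
    have h1 : ν * θ ≤ Metric.infDist (P.vertex i) (P.edgeSet (finCycSucc i)) :=
      le_trans (hF2 i) (Metric.infDist_le_infDist_of_subset hsub
        (P.edgeSet_nonempty _ (hlen0 _)))
    have h2 : Metric.infDist (P.edge i 0) (P.edgeSet (finCycSucc i)) = P.len i := by
      rw [hmin, hdd 0 (P.len i) le_rfl (hlen0 i) le_rfl]
      ring
    rw [show P.vertex i = P.edge i 0 from rfl, h2] at h1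
    exact h1
  have hc0 : 0 ≤ c := by rw [hcdef]; linarith
  have hcge : ν * θ / 2 ≤ c := by rw [hcdef]; linarith
  have hc1 : c ≤ P.len i := by rw [hcdef]; linarith
  have hclt : c < P.len i := by rw [hcdef]; linarith
  have hgen : ∀ w' j'' : Fin k, j'' ≠ w' → finCycSucc j'' ≠ w' →
      ∀ q ∈ P.edgeSet j'', ν * θ ≤ dist (P.vertex w') q := by
    intro w' j'' h1 h2 q hq
    exact le_trans (hF2 w') (Metric.infDist_le_dist_of_mem (Set.mem_biUnion ⟨h1, h2⟩ hq))
  have hcycinj : ∀ a b : Fin k, finCycSucc a = finCycSucc b → a = b := by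
    intro a b h
    have hv := congrArg Fin.val h
    rw [show (finCycSucc a).val = (a.val + 1) % k from rfl,
      show (finCycSucc b).val = (b.val + 1) % k from rfl,
      aux_modHelper a.isLt, aux_modHelper b.isLt] at hv
    have ha := a.isLt; have hb := b.isLt
    apply Fin.ext
    split_ifs at hv <;> omega
  refine ⟨?_, ?_⟩
  · -- F1
    intro j p hp h1 h2
    rw [P.split_carrier i c hc0 hc1]
    have hj := j.isLt
    rcases lt_or_ge j.val i.val with hlt | hge
    · rw [P.split_edgeSet_of_lt i c hlt] at hp ⊢
      rw [P.split_edge_of_lt i c hlt] at h1 h2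
      rw [P.split_len_of_lt i c hlt] at h2
      exact hF1 _ p hp h1 h2
    rcases eq_or_lt_of_le hge with heq | hgt1
    · -- [x,v] half
      rw [P.split_edgeSet_of_eq i c heq.symm] at hp ⊢
      rw [P.split_edge_of_eq i c heq.symm] at h1 h2
      rw [P.split_len_of_eq i c heq.symm] at h2
      obtain ⟨s, hs, rfl⟩ := hp
      have hsle : s ≤ P.len i := le_trans hs.2 hc1
      rw [dist_comm, hdd 0 s le_rfl hs.1 hsle] at h1
      rw [hdd s c hs.1 hs.2 hc1] at h2
      apply aux_le_infDist
      · refine ⟨P.edge i (P.len i),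
          Set.mem_iUnion.2 ⟨i, hmemIcc _ (hlen0 i) le_rfl⟩, fun hmem => ?_⟩
        obtain ⟨t, ht, he⟩ := hmem
        have := aux_geo_inj hd ⟨ht.1, le_trans ht.2 hc1⟩ ⟨hlen0 i, le_rfl⟩ he
        linarith [ht.2]
      · rintro q ⟨hqc, hqn⟩
        by_cases hqe : q ∈ P.edgeSet i
        · obtain ⟨t, ht, rfl⟩ := hqe
          have htc : c < t := by
            by_contra hcon
            exact hqn (Set.mem_image_of_mem _ ⟨ht.1, le_of_not_gt hcon⟩)
          rw [hdd s t hs.1 (by linarith [hs.2]) ht.2]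
          linarith
        · have hkey := hF1 i (P.edge i s) (hmemIcc _ hs.1 hsle)
            (by rw [dist_comm, hdd 0 s le_rfl hs.1 hsle]; linarith)
            (by rw [hdd s (P.len i) hs.1 hsle le_rfl]; linarith)
          exact le_trans hkey (Metric.infDist_le_dist_of_mem ⟨hqc, hqe⟩)
    rcases eq_or_lt_of_le (Nat.succ_le_of_lt hgt1) with heq2 | hgt
    · -- [v,y] half
      rw [P.split_edgeSet_of_succ i c heq2.symm] at hp ⊢
      simp only [P.split_edge_of_succ i c heq2.symm, P.split_len_of_succ i c heq2.symm,
        add_zero] at h1 h2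
      rw [show c + (P.len i - c) = P.len i from by ring] at h2
      obtain ⟨t, ht, rfl⟩ := hp
      have ht0 : 0 ≤ t := le_trans hc0 ht.1
      rw [dist_comm, hdd c t hc0 ht.1 ht.2] at h1
      rw [hdd t (P.len i) ht0 ht.2 le_rfl] at h2
      apply aux_le_infDist
      · refine ⟨P.edge i 0,
          Set.mem_iUnion.2 ⟨i, hmemIcc _ le_rfl (hlen0 i)⟩, fun hmem => ?_⟩
        obtain ⟨t', ht', he⟩ := hmem
        have h0 := aux_geo_inj hd ⟨le_trans hc0 ht'.1, ht'.2⟩ ⟨le_rfl, hlen0 i⟩ he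
        linarith [ht'.1, hcge, hνθ]
      · rintro q ⟨hqc, hqn⟩
        by_cases hqe : q ∈ P.edgeSet i
        · obtain ⟨t', ht', rfl⟩ := hqe
          have htc : t' < c := by
            by_contra hcon
            exact hqn (Set.mem_image_of_mem _ ⟨le_of_not_gt hcon, ht'.2⟩)
          rw [dist_comm, hdd t' t ht'.1 (by linarith [ht.1]) ht.2]
          linarith
        · have hkey := hF1 i (P.edge i t) (hmemIcc _ ht0 ht.2)
            (by rw [dist_comm, hdd 0 t le_rfl ht0 ht.2]; linarith)
            (by rw [hdd t (P.len i) ht0 ht.2 le_rfl]; linarith)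
          exact le_trans hkey (Metric.infDist_le_dist_of_mem ⟨hqc, hqe⟩)
    · rw [P.split_edgeSet_of_gt i c hgt] at hp ⊢
      rw [P.split_edge_of_gt i c hgt] at h1 h2
      rw [P.split_len_of_gt i c hgt] at h2
      exact hF1 _ p hp h1 h2
  · -- F2
    intro m
    have hm := m.isLt
    have hν2θ : ν / 2 * θ = ν * θ / 2 := by ring
    have hlen0' : ∀ j : Fin (k+1), 0 ≤ (P.split i c).len j := by
      intro j
      have hj := j.isLt
      rcases lt_or_ge j.val i.val with h | h
      · rw [P.split_len_of_lt i c h]; exact hlen0 _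
      rcases eq_or_lt_of_le h with h | h
      · rw [P.split_len_of_eq i c h.symm]; exact hc0
      rcases eq_or_lt_of_le (Nat.succ_le_of_lt h) with h2 | h2
      · rw [P.split_len_of_succ i c h2.symm]; linarith
      · rw [P.split_len_of_gt i c h2]; exact hlen0 _
    have hopp_ne : ((P.split i c).opp m).Nonempty := by
      set j0v : ℕ := if m.val + 2 ≤ k then m.val + 2 else m.val + 2 - (k+1) with hj0v
      have hj0lt : j0v < k + 1 := by rw [hj0v]; split_ifs <;> omega
      refine ⟨(P.split i c).edge ⟨j0v, hj0lt⟩ 0,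
        Set.mem_biUnion ⟨?_, ?_⟩
          (Set.mem_image_of_mem _ ⟨le_rfl, hlen0' ⟨j0v, hj0lt⟩⟩)⟩
      · apply Fin.ne_of_val_ne
        show j0v ≠ m.val
        rw [hj0v]; split_ifs <;> omega
      · apply Fin.ne_of_val_ne
        show (j0v + 1) % (k+1) ≠ m.val
        rw [aux_modHelper hj0lt, hj0v]
        split_ifs <;> omega
    rw [hν2θ]
    apply aux_le_infDist hopp_ne
    intro q hq
    simp only [PrePolygon.opp, Set.mem_iUnion, Set.mem_setOf_eq] at hq
    obtain ⟨j, ⟨hj1, hj2⟩, hqj⟩ := hq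
    have hj1' : j.val ≠ m.val := fun h => hj1 (Fin.ext h)
    have hj2' : (if j.val + 1 = k + 1 then 0 else j.val + 1) ≠ m.val := by
      rw [← aux_modHelper j.isLt]
      exact fun h => hj2 (Fin.ext h)
    have hjlt := j.isLt
    have hj2n : (j.val = k ∧ m.val ≠ 0) ∨ (j.val < k ∧ j.val + 1 ≠ m.val) := by
      rcases Nat.lt_or_ge j.val k with h | h
      · exact Or.inr ⟨h, fun he => hj2' (by rw [if_neg (by omega)]; exact he)⟩
      · have hjk : j.val = k := by omega
        exact Or.inl ⟨hjk, fun he => hj2' (by rw [if_pos (by omega)]; omega)⟩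
    rcases (by omega : m.val = i.val + 1 ∨ (m.val ≤ i.val ∨ i.val + 2 ≤ m.val)) with hmv | hmv
    · -- the new vertex v
      have hvm : (P.split i c).vertex m = P.edge i c := by
        show (P.split i c).edge m 0 = _
        rw [P.split_edge_of_succ i c hmv]
        simp
      rw [hvm]
      have hjcase : j.val < i.val ∨ i.val + 1 < j.val := by omega
      obtain ⟨j'', hj''i, hqq⟩ : ∃ j'' : Fin k, j'' ≠ i ∧ q ∈ P.edgeSet j'' := by
        rcases hjcase with h | h
        · refine ⟨⟨j.val, by omega⟩, Fin.ne_of_val_ne (by simp only [Fin.val_mk]; omega), ?_⟩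
          rwa [P.split_edgeSet_of_lt i c h] at hqj
        · refine ⟨⟨j.val - 1, by omega⟩, Fin.ne_of_val_ne (by simp only [Fin.val_mk]; omega), ?_⟩
          rwa [P.split_edgeSet_of_gt i c h] at hqj
      by_cases hjy : j'' = finCycSucc i
      · have hxq : P.len i ≤ dist (P.edge i 0) q := by
          have hle := Metric.infDist_le_dist_of_mem (x := P.edge i 0) (hjy ▸ hqq)
          rw [hmin, hdd 0 (P.len i) le_rfl (hlen0 i) le_rfl] at hle
          linarith
        have hxv : dist (P.edge i 0) (P.edge i c) = c := by
          rw [hdd 0 c le_rfl hc0 hc1]; ring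
        have htri := dist_triangle (P.edge i 0) (P.edge i c) q
        linarith
      · have hyq := hgen (finCycSucc i) j'' hjy (fun h => hj''i (hcycinj _ _ h)) q hqq
        rw [show P.vertex (finCycSucc i) = P.edge (finCycSucc i) 0 from rfl, ← hy] at hyq
        have hvy : dist (P.edge i c) (P.edge i (P.len i)) = P.len i - c :=
          hdd c (P.len i) hc0 hc1 le_rfl
        have htri := dist_triangle (P.edge i (P.len i)) (P.edge i c) q
        rw [dist_comm (P.edge i (P.len i)) (P.edge i c)] at htri
        linarith
    · -- an old vertex
      obtain ⟨w', hw'v, hvm⟩ : ∃ w' : Fin k,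
          (m.val ≤ i.val ∧ w'.val = m.val ∨ i.val + 2 ≤ m.val ∧ w'.val = m.val - 1) ∧
          (P.split i c).vertex m = P.vertex w' := by
        rcases hmv with h | h
        · refine ⟨⟨m.val, by omega⟩, Or.inl ⟨h, rfl⟩, ?_⟩
          show (P.split i c).edge m 0 = P.edge _ 0
          rcases eq_or_lt_of_le h with h2 | h2
          · rw [P.split_edge_of_eq i c h2]
            congr 1
            exact Fin.ext h2.symm
          · rw [P.split_edge_of_lt i c h2]
        · refine ⟨⟨m.val - 1, by omega⟩, Or.inr ⟨h, rfl⟩, ?_⟩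
          show (P.split i c).edge m 0 = P.edge _ 0
          rw [P.split_edge_of_gt i c (by omega)]
      have hw'lt := w'.isLt
      rw [hvm]
      rcases lt_or_ge j.val i.val with hjlt2 | hjge2
      · rw [P.split_edgeSet_of_lt i c hjlt2] at hqj
        refine le_trans (by linarith : ν * θ / 2 ≤ ν * θ)
          (hgen w' ⟨j.val, by omega⟩ (Fin.ne_of_val_ne (by simp only [Fin.val_mk]; omega))
            ?_ q hqj)
        apply Fin.ne_of_val_ne
        show (j.val + 1) % k ≠ w'.val
        rw [aux_modHelper (by omega : j.val < k)]
        split_ifs <;> omega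
      rcases eq_or_lt_of_le hjge2 with hje | hjgt1
      · -- q on [x,v]
        rw [P.split_edgeSet_of_eq i c hje.symm] at hqj
        obtain ⟨t, ht, rfl⟩ := hqj
        by_cases hwy : w' = finCycSucc i
        · rw [hwy, show P.vertex (finCycSucc i) = P.edge (finCycSucc i) 0 from rfl, ← hy]
          rw [dist_comm, hdd t (P.len i) ht.1 (le_trans ht.2 hc1) le_rfl]
          have := ht.2
          linarith
        · refine le_trans (by linarith : ν * θ / 2 ≤ ν * θ)
            (hgen w' i (Fin.ne_of_val_ne (by omega)) (fun h => hwy h.symm) _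
              (hmemIcc t ht.1 (le_trans ht.2 hc1)))
      rcases eq_or_lt_of_le (Nat.succ_le_of_lt hjgt1) with hje2 | hjgt
      · -- q on [v,y]
        rw [P.split_edgeSet_of_succ i c hje2.symm] at hqj
        obtain ⟨t, ht, rfl⟩ := hqj
        by_cases hwx : w' = i
        · rw [hwx, show P.vertex i = P.edge i 0 from rfl]
          rw [hdd 0 t le_rfl (le_trans hc0 ht.1) ht.2]
          have hct := ht.1
          linarith [hcge, hνθ]
        · refine le_trans (by linarith : ν * θ / 2 ≤ ν * θ)
            (hgen w' i (fun h => hwx h.symm) ?_ _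
              (hmemIcc t (le_trans hc0 ht.1) ht.2))
          apply Fin.ne_of_val_ne
          show (i.val + 1) % k ≠ w'.val
          rw [aux_modHelper i.isLt]
          split_ifs <;> omega
      · rw [P.split_edgeSet_of_gt i c hjgt] at hqj
        refine le_trans (by linarith : ν * θ / 2 ≤ ν * θ)
          (hgen w' ⟨j.val - 1, by omega⟩
            (Fin.ne_of_val_ne (by simp only [Fin.val_mk]; omega)) ?_ q hqj)
        apply Fin.ne_of_val_ne
        show (j.val - 1 + 1) % k ≠ w'.val
        rw [aux_modHelper (by omega)]
        split_ifs <;> omega
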